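/- Let B_i be a middle block of a strongly irreducible ordering (the intersection of pinch convex sets A_{m_{i+1}} and V \ A_{m_i}), and let B_i = B⁰_i ⊇ B¹_i ⊇ ⋯ ⊇ B^ℓ_i = B′_i be the sequence obtained by repeatedly removing a vertex of maximal nonnegative slope. If B′_i is non-empty, then B′_i is a pinch cluster. -/

import Mathlib

open Finset

variable {V : Type*} [Fintype V] [DecidableEq V]

/-- The total weight of the boundary of `A`: the sum of the weights of the
edges with exactly one endpoint in `A`. -/
def boundarySize (w : V → V → ℝ) (A : Finset V) : ℝ :=
  ∑ u ∈ A, ∑ x ∈ Aᶜ, w u x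

/-- The pinchSlope of a vertex `v` with respect to a vertex set `A`: the total
weight of the edges from `v` to the complement of `A` minus the total weight
of the edges from `v` to `A`. -/
def pinchSlope (w : V → V → ℝ) (A : Finset V) (v : V) : ℝ :=
  ∑ x ∈ Aᶜ, w v x - ∑ x ∈ A, w v x

/-- `A` is pinch convex: for any sequence of vertices outside of `A`, if adding
all of them to `A` strictly decreases the boundary, then adding some proper
initial segment strictly increases the boundary. -/
def PinchConvex (w : V → V → ℝ) (A : Finset V) : Prop :=
  ∀ L : List V, (∀ x ∈ L, x ∉ A) →
    boundarySize w (A ∪ L.toFinset) < boundarySize w A →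
    ∃ k < L.length, boundarySize w A < boundarySize w (A ∪ (L.take k).toFinset)

/-- `A` is pinch concave: for any sequence of vertices of `A`, if removing
all of them from `A` strictly decreases the boundary, then removing some proper
initial segment strictly increases the boundary. -/
def PinchConcave (w : V → V → ℝ) (A : Finset V) : Prop :=
  ∀ L : List V, (∀ x ∈ L, x ∈ A) →
    boundarySize w (A \ L.toFinset) < boundarySize w A →
    ∃ k < L.length, boundarySize w A < boundarySize w (A \ (L.take k).toFinset)

/-- `A` is a pinch cluster: whenever adding a sequence of vertices to `A`, or
removing a sequence of vertices from `A`, strictly decreases the boundary, some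
proper initial segment of the sequence strictly increases the boundary. -/
def PinchCluster (w : V → V → ℝ) (A : Finset V) : Prop :=
  (∀ L : List V,
    boundarySize w (A ∪ L.toFinset) < boundarySize w A →
    ∃ k < L.length, boundarySize w A < boundarySize w (A ∪ (L.take k).toFinset)) ∧
  (∀ L : List V,
    boundarySize w (A \ L.toFinset) < boundarySize w A →
    ∃ k < L.length, boundarySize w A < boundarySize w (A \ (L.take k).toFinset))

section Aux

set_option linter.unusedSectionVars false

/-- Slope is antitone in the set. -/
lemma slope_anti (w : V → V → ℝ) (hw0 : ∀ u v, 0 ≤ w u v) {A B : Finset V}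
    (hAB : A ⊆ B) (v : V) : pinchSlope w B v ≤ pinchSlope w A v := by
  unfold pinchSlope
  refine sub_le_sub ?_ ?_
  · exact Finset.sum_le_sum_of_subset_of_nonneg (Finset.compl_subset_compl.mpr hAB)
      (fun x _ _ => hw0 v x)
  · exact Finset.sum_le_sum_of_subset_of_nonneg hAB (fun x _ _ => hw0 v x)

/-- Adding a vertex changes the boundary by its slope with respect to the new set. -/
lemma boundary_insert (w : V → V → ℝ) (hsym : ∀ u v, w u v = w v u)
    (hdiag : ∀ v, w v v = 0) {A : Finset V} {v : V} (hv : v ∉ A) :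
    boundarySize w (insert v A) = boundarySize w A + pinchSlope w (insert v A) v := by
  have hvc : v ∈ Aᶜ := mem_compl.mpr hv
  unfold boundarySize pinchSlope
  rw [Finset.sum_insert hv, Finset.compl_insert, Finset.sum_erase_eq_sub hvc]
  rw [Finset.sum_congr rfl (fun u _ => Finset.sum_erase_eq_sub (f := fun x => w u x) hvc)]
  rw [Finset.sum_sub_distrib, Finset.sum_insert hv, hdiag v]
  have h2 : ∑ u ∈ A, w u v = ∑ u ∈ A, w v u := Finset.sum_congr rfl (fun u _ => hsym u v)
  rw [h2]
  ring

/-- Removing a vertex changes the boundary by minus its slope. -/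
lemma boundary_erase (w : V → V → ℝ) (hsym : ∀ u v, w u v = w v u)
    (hdiag : ∀ v, w v v = 0) {A : Finset V} {v : V} (hv : v ∈ A) :
    boundarySize w (A.erase v) = boundarySize w A - pinchSlope w A v := by
  have h := boundary_insert w hsym hdiag (A := A.erase v) (v := v) (notMem_erase v A)
  rw [insert_erase hv] at h
  linarith

/-- Chain form of pinch convexity. -/
def PC (w : V → V → ℝ) (A : Finset V) : Prop :=
  ∀ L : List V, (∀ x ∈ L, x ∉ A) →
    (∀ k < L.length, boundarySize w (A ∪ (L.take k).toFinset) ≤ boundarySize w A) →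
    boundarySize w A ≤ boundarySize w (A ∪ L.toFinset)

lemma pinchConvex_iff_PC (w : V → V → ℝ) (A : Finset V) : PinchConvex w A ↔ PC w A := by
  constructor
  · intro h L hL hpre
    by_contra hlt
    rw [not_le] at hlt
    obtain ⟨k, hk, hgt⟩ := h L hL hlt
    exact absurd (hpre k hk) (not_le.mpr hgt)
  · intro h L hL hlt
    by_contra hno
    push_neg at hno
    exact absurd (h L hL hno) (not_le.mpr hlt)

lemma filter_take_exists (p : V → Bool) :
    ∀ (L : List V) (m : ℕ), m ≤ (L.filter p).length →
      ∃ k ≤ L.length, (L.filter p).take m = (L.take k).filter p ∧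
        (m < (L.filter p).length → k < L.length) := by
  intro L
  induction L with
  | nil => intro m hm; exact ⟨0, le_refl _, by simp at hm ⊢, by simp⟩
  | cons a l ih =>
    intro m hm
    by_cases hpa : p a
    · rw [List.filter_cons_of_pos hpa] at hm ⊢
      match m with
      | 0 => exact ⟨0, Nat.zero_le _, by simp, fun _ => Nat.succ_pos _⟩
      | m + 1 =>
        obtain ⟨k, hk, heq, hs⟩ := ih m (Nat.succ_le_succ_iff.mp hm)
        refine ⟨k + 1, Nat.succ_le_succ hk, ?_,
          fun h => Nat.succ_lt_succ (hs (Nat.succ_lt_succ_iff.mp h))⟩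
        rw [List.take_succ_cons, List.take_succ_cons, List.filter_cons_of_pos hpa, heq]
    · rw [List.filter_cons_of_neg (by simpa using hpa)] at hm ⊢
      obtain ⟨k, hk, heq, hs⟩ := ih m hm
      refine ⟨k + 1, Nat.succ_le_succ hk, ?_, fun h => Nat.succ_lt_succ (hs h)⟩
      rw [List.take_succ_cons, List.filter_cons_of_neg (by simpa using hpa), heq]

lemma union_filter_toFinset (p : V → Bool) (C : Finset V)
    (h : ∀ x, p x = false → x ∈ C) (l : List V) :
    C ∪ (l.filter p).toFinset = C ∪ l.toFinset := by
  ext x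
  simp only [mem_union, List.mem_toFinset, List.mem_filter]
  constructor
  · rintro (hx | ⟨hx, _⟩)
    · exact Or.inl hx
    · exact Or.inr hx
  · rintro (hx | hx)
    · exact Or.inl hx
    · by_cases hp : p x
      · exact Or.inr ⟨hx, hp⟩
      · exact Or.inl (h x (by simpa using hp))

lemma take_succ_toFinset (L : List V) (k : ℕ) (hk : k < L.length) :
    (L.take (k+1)).toFinset = insert (L[k]) (L.take k).toFinset := by
  ext x
  simp only [List.mem_toFinset, Finset.mem_insert, List.take_succ,
    List.getElem?_eq_getElem hk, Option.toList_some, List.mem_append, List.mem_singleton]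
  tauto

/-- Key sublemma: if a minimal violating chain for `A` ends at a vertex outside the
pinch convex superset `C`, we get a violating chain for `C`. -/
lemma subStep (w : V → V → ℝ) (hw0 : ∀ u v, 0 ≤ w u v) (hsym : ∀ u v, w u v = w v u)
    (hdiag : ∀ v, w v v = 0) {A C : Finset V} (hAC : A ⊆ C) (hPC : PC w C)
    (L : List V) (hLA : ∀ x ∈ L, x ∉ A)
    (heq : ∀ k < L.length, boundarySize w (A ∪ (L.take k).toFinset) = boundarySize w A)
    (hfin : boundarySize w (A ∪ L.toFinset) < boundarySize w A)
    (hlast : ∀ (k : ℕ) (hk : k < L.length), k + 1 = L.length → L[k] ∉ C) : False := by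
  have key : ∀ k ≤ L.length, boundarySize w (C ∪ (L.take k).toFinset) ≤
      boundarySize w C +
        (boundarySize w (A ∪ (L.take k).toFinset) - boundarySize w A) := by
    intro k
    induction k with
    | zero => intro _; simp
    | succ k ih =>
      intro hk1
      have hk : k < L.length := hk1
      have ihk := ih (le_of_lt hk)
      rw [take_succ_toFinset L k hk, Finset.union_insert, Finset.union_insert]
      by_cases hvT : L[k] ∈ A ∪ (L.take k).toFinset
      · rw [Finset.insert_eq_self.mpr hvT,
          Finset.insert_eq_self.mpr (Finset.union_subset_union_left hAC hvT)]
        exact ihk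
      · by_cases hvC : L[k] ∈ C
        · rcases Nat.lt_or_ge (k+1) L.length with hlt | hge
          · rw [Finset.insert_eq_self.mpr (Finset.mem_union_left _ hvC)]
            have e := heq (k+1) hlt
            rw [take_succ_toFinset L k hk, Finset.union_insert] at e
            have e0 := heq k hk
            rw [e]
            linarith
          · exact absurd hvC (hlast k hk (le_antisymm hk1 hge))
        · have hvU : L[k] ∉ C ∪ (L.take k).toFinset := by
            rw [Finset.mem_union]
            rintro (h | h)
            · exact hvC h
            · exact hvT (Finset.mem_union_right _ h)
          rw [boundary_insert w hsym hdiag hvU, boundary_insert w hsym hdiag hvT]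
          have hmono := slope_anti w hw0
            (show insert (L[k]) (A ∪ (L.take k).toFinset) ⊆
                insert (L[k]) (C ∪ (L.take k).toFinset) from
              Finset.insert_subset_insert _ (Finset.union_subset_union_left hAC)) (L[k])
          linarith
  classical
  set p : V → Bool := fun x => decide (x ∉ C) with hp
  have hpf : ∀ x, p x = false → x ∈ C := by
    intro x hx
    simp only [hp, decide_eq_false_iff_not, not_not] at hx
    exact hx
  have hfilU := union_filter_toFinset p C hpf
  have hL' : ∀ x ∈ L.filter p, x ∉ C := by
    intro x hx
    have h2 := (List.mem_filter.mp hx).2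
    simpa [hp] using h2
  have hprefix : ∀ m < (L.filter p).length,
      boundarySize w (C ∪ ((L.filter p).take m).toFinset) ≤ boundarySize w C := by
    intro m hm
    obtain ⟨k, hk, heqf, hstrict⟩ := filter_take_exists p L m (le_of_lt hm)
    rw [heqf, hfilU]
    have h1 := key k hk
    rw [heq k (hstrict hm)] at h1
    linarith
  have hfinal := hPC (L.filter p) hL' hprefix
  rw [hfilU] at hfinal
  have h1 := key L.length le_rfl
  rw [List.take_length] at h1
  linarith

/-- The intersection of two pinch convex sets is pinch convex (chain form). -/
lemma PC_inter (w : V → V → ℝ) (hw0 : ∀ u v, 0 ≤ w u v) (hsym : ∀ u v, w u v = w v u)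
    (hdiag : ∀ v, w v v = 0) {C₁ C₂ : Finset V} (h1 : PC w C₁) (h2 : PC w C₂) :
    PC w (C₁ ∩ C₂) := by
  intro L₀ hLA₀ hpre₀
  by_contra hfin₀
  rw [not_le] at hfin₀
  suffices H : ∀ n (L : List V), L.length = n → (∀ x ∈ L, x ∉ C₁ ∩ C₂) →
      (∀ k < L.length, boundarySize w ((C₁ ∩ C₂) ∪ (L.take k).toFinset) ≤
        boundarySize w (C₁ ∩ C₂)) →
      boundarySize w ((C₁ ∩ C₂) ∪ L.toFinset) < boundarySize w (C₁ ∩ C₂) → False by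
    exact H L₀.length L₀ rfl hLA₀ hpre₀ hfin₀
  intro n
  induction n using Nat.strong_induction_on with
  | _ n ih =>
    intro L hlen hLA hpre hfin
    by_cases hmin : ∃ k < L.length,
        boundarySize w ((C₁ ∩ C₂) ∪ (L.take k).toFinset) < boundarySize w (C₁ ∩ C₂)
    · obtain ⟨k, hk, hklt⟩ := hmin
      refine ih k (by omega) (L.take k) (by rw [List.length_take]; omega)
        (fun x hx => hLA x (List.mem_of_mem_take hx)) ?_ ?_
      · intro k' hk'
        rw [List.length_take] at hk'
        rw [List.take_take, show min k' k = k' from by omega]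
        exact hpre k' (by omega)
      · exact hklt
    · push_neg at hmin
      have heq : ∀ k < L.length, boundarySize w ((C₁ ∩ C₂) ∪ (L.take k).toFinset) =
          boundarySize w (C₁ ∩ C₂) := fun k hk => le_antisymm (hpre k hk) (hmin k hk)
      have hneL : L ≠ [] := by
        rintro rfl
        simp only [List.toFinset_nil, Finset.union_empty] at hfin
        exact lt_irrefl _ hfin
      have hlen1 : 0 < L.length := List.length_pos_iff.mpr hneL
      have hidx : L.length - 1 < L.length := by omega
      have hnot : L[L.length - 1] ∉ C₁ ∩ C₂ := hLA _ (List.getElem_mem hidx)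
      rw [Finset.mem_inter] at hnot
      by_cases hc1 : L[L.length - 1] ∈ C₁
      · have hc2 : L[L.length - 1] ∉ C₂ := fun h => hnot ⟨hc1, h⟩
        refine subStep w hw0 hsym hdiag Finset.inter_subset_right h2 L hLA heq hfin ?_
        intro k hk hk1
        have hkk : k = L.length - 1 := by omega
        subst hkk
        exact hc2
      · refine subStep w hw0 hsym hdiag Finset.inter_subset_left h1 L hLA heq hfin ?_
        intro k hk hk1
        have hkk : k = L.length - 1 := by omega
        subst hkk
        exact hc1

/-- Pinch convexity (chain form) is preserved by removing a vertex of
nonnegative slope. -/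
lemma PC_erase (w : V → V → ℝ) (hw0 : ∀ u v, 0 ≤ w u v) (hsym : ∀ u v, w u v = w v u)
    (hdiag : ∀ v, w v v = 0) {A : Finset V} {v : V} (hPC : PC w A) (hv : v ∈ A)
    (hs : 0 ≤ pinchSlope w A v) : PC w (A.erase v) := by
  intro L hLA hpre
  by_contra hfin
  rw [not_le] at hfin
  have hins : insert v (A.erase v) = A := Finset.insert_erase hv
  have hfA' : boundarySize w (A.erase v) = boundarySize w A - pinchSlope w A v :=
    boundary_erase w hsym hdiag hv
  have key : ∀ S : Finset V, boundarySize w (A ∪ S) ≤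
      boundarySize w (A.erase v ∪ S) + pinchSlope w A v := by
    intro S
    have hAs : A ∪ S = insert v (A.erase v ∪ S) := by
      rw [← Finset.insert_union, hins]
    by_cases hvS : v ∈ A.erase v ∪ S
    · rw [hAs, Finset.insert_eq_self.mpr hvS]
      linarith
    · rw [hAs, boundary_insert w hsym hdiag hvS]
      have hmono := slope_anti w hw0 (show A ⊆ insert v (A.erase v ∪ S) by
        intro x hx
        by_cases hxv : x = v
        · exact Finset.mem_insert.mpr (Or.inl hxv)
        · exact Finset.mem_insert.mpr
            (Or.inr (Finset.mem_union_left _ (Finset.mem_erase.mpr ⟨hxv, hx⟩)))) v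
      linarith
  classical
  set p : V → Bool := fun x => decide (x ≠ v) with hp
  have hpf : ∀ x, p x = false → x ∈ A := by
    intro x hx
    have hxv : x = v := by simpa [hp] using hx
    rw [hxv]; exact hv
  have hfilU := union_filter_toFinset p A hpf
  have hL' : ∀ x ∈ L.filter p, x ∉ A := by
    intro x hx
    obtain ⟨hxL, hxp⟩ := List.mem_filter.mp hx
    have hxv : x ≠ v := by simpa [hp] using hxp
    intro hxA
    exact hLA x hxL (Finset.mem_erase.mpr ⟨hxv, hxA⟩)
  have hprefix : ∀ m < (L.filter p).length,
      boundarySize w (A ∪ ((L.filter p).take m).toFinset) ≤ boundarySize w A := by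
    intro m hm
    obtain ⟨k, hk, heqf, hstrict⟩ := filter_take_exists p L m (le_of_lt hm)
    rw [heqf, hfilU]
    have h1 := key (L.take k).toFinset
    have h2 := hpre k (hstrict hm)
    linarith
  have hfinal := hPC (L.filter p) hL' hprefix
  rw [hfilU] at hfinal
  have h1 := key L.toFinset
  linarith

/-- The concave direction: if every vertex has strictly negative slope,
any removal sequence that decreases the boundary has an increasing prefix. -/
lemma concave_part (w : V → V → ℝ) (hsym : ∀ u v, w u v = w v u)
    (hdiag : ∀ v, w v v = 0) {B' : Finset V}
    (hterm : ∀ v ∈ B', pinchSlope w B' v < 0) :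
    ∀ L : List V, boundarySize w (B' \ L.toFinset) < boundarySize w B' →
      ∃ k < L.length, boundarySize w B' < boundarySize w (B' \ (L.take k).toFinset) := by
  intro L
  induction L with
  | nil =>
    intro h
    simp only [List.toFinset_nil, Finset.sdiff_empty] at h
    exact absurd h (lt_irrefl _)
  | cons a l ih =>
    intro h
    by_cases ha : a ∈ B'
    · have herase : boundarySize w B' < boundarySize w (B'.erase a) := by
        rw [boundary_erase w hsym hdiag ha]
        have := hterm a ha
        linarith
      have hsingle : B' \ ({a} : Finset V) = B'.erase a := by
        ext x; simp [Finset.mem_sdiff, Finset.mem_erase, and_comm]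
      match l with
      | [] =>
        exfalso
        have he : (a :: ([] : List V)).toFinset = {a} := by simp
        rw [he, hsingle] at h
        linarith
      | b :: l' =>
        refine ⟨1, by simp, ?_⟩
        have ht : ((a :: b :: l').take 1).toFinset = ({a} : Finset V) := by simp
        rw [ht, hsingle]
        exact herase
    · have hskip : ∀ X : Finset V, B' \ insert a X = B' \ X := by
        intro X
        ext x
        simp only [Finset.mem_sdiff, Finset.mem_insert]
        constructor
        · rintro ⟨h1, h2⟩
          exact ⟨h1, fun hx => h2 (Or.inr hx)⟩
        · rintro ⟨h1, h2⟩
          refine ⟨h1, ?_⟩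
          rintro (rfl | hx)
          exacts [ha h1, h2 hx]
      rw [List.toFinset_cons, hskip] at h
      obtain ⟨k, hk, hgt⟩ := ih h
      refine ⟨k + 1, by simpa using hk, ?_⟩
      rw [List.take_succ_cons, List.toFinset_cons, hskip]
      exact hgt

end Aux

/-- Lemma (middleclusterlem): if `B 0` is a middle block (the intersection of
two pinch convex sets) and `B (t+1)` is obtained from `B t` by removing a
vertex of maximal (nonnegative) slope, terminating at `B ℓ` in which every
vertex has strictly negative slope, then if `B ℓ` is non-empty it is a
pinch cluster. -/
theorem middle_block_pinchCluster (w : V → V → ℝ)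
    (hw0 : ∀ u v, 0 ≤ w u v) (hsym : ∀ u v, w u v = w v u)
    (hdiag : ∀ v, w v v = 0) (C₁ C₂ : Finset V)
    (hC₁ : PinchConvex w C₁) (hC₂ : PinchConvex w C₂)
    (B : ℕ → Finset V) (ℓ : ℕ) (hB0 : B 0 = C₁ ∩ C₂)
    (hstep : ∀ t < ℓ, ∃ v ∈ B t, 0 ≤ pinchSlope w (B t) v ∧
      (∀ u ∈ B t, pinchSlope w (B t) u ≤ pinchSlope w (B t) v) ∧ B (t + 1) = (B t).erase v)
    (hterm : ∀ v ∈ B ℓ, pinchSlope w (B ℓ) v < 0)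
    (hne : (B ℓ).Nonempty) :
    PinchCluster w (B ℓ) := by
  have hPCt : ∀ t, t ≤ ℓ → PC w (B t) := by
    intro t
    induction t with
    | zero =>
      intro _
      rw [hB0]
      exact PC_inter w hw0 hsym hdiag ((pinchConvex_iff_PC w C₁).mp hC₁)
        ((pinchConvex_iff_PC w C₂).mp hC₂)
    | succ t ih =>
      intro ht
      obtain ⟨v, hvB, hs, -, hBe⟩ := hstep t (by omega)
      rw [hBe]
      exact PC_erase w hw0 hsym hdiag (ih (by omega)) hvB hs
  have hPCl : PinchConvex w (B ℓ) := (pinchConvex_iff_PC w (B ℓ)).mpr (hPCt ℓ le_rfl)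
  constructor
  · intro L hlt
    classical
    set p : V → Bool := fun x => decide (x ∉ B ℓ) with hp
    have hpf : ∀ x, p x = false → x ∈ B ℓ := by
      intro x hx
      simp only [hp, decide_eq_false_iff_not, not_not] at hx
      exact hx
    have hfilU := union_filter_toFinset p (B ℓ) hpf
    have hL' : ∀ x ∈ L.filter p, x ∉ B ℓ := by
      intro x hx
      have h2 := (List.mem_filter.mp hx).2
      simpa [hp] using h2
    have hlt' : boundarySize w (B ℓ ∪ (L.filter p).toFinset) < boundarySize w (B ℓ) := by
      rw [hfilU]
      exact hlt
    obtain ⟨m, hm, hgt⟩ := hPCl (L.filter p) hL' hlt'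
    obtain ⟨k, hk, heqf, hstrict⟩ := filter_take_exists p L m (le_of_lt hm)
    refine ⟨k, hstrict hm, ?_⟩
    rw [heqf, hfilU] at hgt
    exact hgt
  · exact concave_part w hsym hdiag hterm
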